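/- Let N, d, K be positive integers, σ > 0, and let X^{(0)}, X^{(1)}, …, X^{(K−1)} be N×d real matrices whose rows all have Euclidean norm 1. Let A and A' be N×N matrices with entries in {0,1} that are edge-level adjacent (they differ in exactly one entry, where A has a 1 and A' has a 0). Let P be the law on (ℝ^{N×d})^K of the tuple (Aᵀ·X^{(0)} + Z_1, …, Aᵀ·X^{(K−1)} + Z_K) and P' the law of (A'ᵀ·X^{(0)} + Z_1, …, A'ᵀ·X^{(K−1)} + Z_K), where Z_1, …, Z_K are independent N×d matrices of independent N(0, σ²) entries. Then for every α > 1, the Rényi divergence of order α between P and P' is at most K·α/(2σ²). -/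

import Mathlib

open MeasureTheory ProbabilityTheory
open scoped BigOperators

open scoped ENNReal NNReal
open Real

section PMAAux

theorem my_lintegral_fin_prod {n : ℕ} {E : Fin n → Type*} [∀ i, MeasurableSpace (E i)]
    (μ : ∀ i, Measure (E i)) [∀ i, SigmaFinite (μ i)]
    (f : ∀ i, E i → ℝ≥0∞) (hf : ∀ i, Measurable (f i)) :
    ∫⁻ x : ((i : Fin n) → E i), ∏ i, f i (x i) ∂(Measure.pi μ) = ∏ i, ∫⁻ x, f i x ∂μ i := by
  induction n with
  | zero =>
      simp [Measure.pi_of_empty]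
  | succ n ih =>
      have h := (MeasureTheory.measurePreserving_piFinSuccAbove μ 0).symm
      rw [← h.lintegral_comp (f := fun x : (i : Fin (n+1)) → E i => ∏ i, f i (x i))
        (Finset.measurable_prod _ fun i _ => (hf i).comp (measurable_pi_apply i))]
      simp_rw [MeasurableEquiv.piFinSuccAbove_symm_apply, Fin.insertNthEquiv,
        Equiv.coe_fn_mk, Fin.insertNth_zero, Fin.prod_univ_succ, Fin.cons_zero, Fin.cons_succ]
      change ∫⁻ a : E 0 × ((j : Fin n) → E j.succ), f 0 a.1 * ∏ x, f x.succ (a.2 x)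
        ∂(μ 0).prod (Measure.pi fun j => μ j.succ) = _
      rw [MeasureTheory.lintegral_prod_mul (f := fun y => f 0 y)
        (g := fun y : (j : Fin n) → E j.succ => ∏ i : Fin n, f i.succ (y i))
        (hf 0).aemeasurable
        (Finset.measurable_prod _ fun i _ =>
          (hf i.succ).comp (measurable_pi_apply i)).aemeasurable]
      rw [ih (fun i => μ i.succ) (fun i => f i.succ) (fun i => hf i.succ)]

theorem my_pi_withDensity {n : ℕ} {E : Fin n → Type*} [∀ i, MeasurableSpace (E i)]
    (μ : ∀ i, Measure (E i)) [∀ i, SigmaFinite (μ i)]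
    (f : ∀ i, E i → ℝ≥0∞) (hf : ∀ i, Measurable (f i))
    [∀ i, SigmaFinite ((μ i).withDensity (f i))] :
    Measure.pi (fun i => (μ i).withDensity (f i))
      = (Measure.pi μ).withDensity (fun x => ∏ i, f i (x i)) := by
  refine (Measure.pi_eq (μ := fun i => (μ i).withDensity (f i))
    (μ' := (Measure.pi μ).withDensity fun x => ∏ i, f i (x i)) fun s hs => ?_)
  rw [withDensity_apply _ (MeasurableSet.univ_pi hs),
    ← lintegral_indicator (MeasurableSet.univ_pi hs)]
  have hind : ∀ x : ((i : Fin n) → E i),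
      (Set.pi Set.univ s).indicator (fun x => ∏ i, f i (x i)) x
        = ∏ i, (s i).indicator (f i) (x i) := by
    intro x
    by_cases hx : x ∈ Set.pi Set.univ s
    · rw [Set.indicator_of_mem hx]
      exact Finset.prod_congr rfl fun i _ =>
        (Set.indicator_of_mem (hx i (Set.mem_univ i)) _).symm
    · rw [Set.indicator_of_notMem hx]
      rw [Set.mem_univ_pi] at hx
      push_neg at hx
      obtain ⟨i, hi⟩ := hx
      exact (Finset.prod_eq_zero (Finset.mem_univ i)
        (Set.indicator_of_notMem hi _)).symm
  simp_rw [hind]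
  rw [my_lintegral_fin_prod μ _ (fun i => (hf i).indicator (hs i))]
  exact Finset.prod_congr rfl fun i _ => by
    rw [lintegral_indicator (hs i), withDensity_apply _ (hs i)]

theorem my_gauss_pi {K N d : ℕ} (vv : ℝ≥0) (hvv : vv ≠ 0) (m : Fin K → Fin N → Fin d → ℝ) :
    (Measure.pi fun k => Measure.pi fun i => Measure.pi fun j => gaussianReal (m k i j) vv)
      = (Measure.pi fun _ : Fin K => Measure.pi fun _ : Fin N =>
          Measure.pi fun _ : Fin d => (volume : Measure ℝ)).withDensity
        (fun x => ∏ k, ∏ i, ∏ j, gaussianPDF (m k i j) vv (x k i j)) := by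
  have hrw : ∀ (a : ℝ), gaussianReal a vv = volume.withDensity (gaussianPDF a vv) :=
    fun a => gaussianReal_of_var_ne_zero a hvv
  have hsf : ∀ (a : ℝ), SigmaFinite (volume.withDensity (gaussianPDF a vv)) := fun a => by
    rw [← hrw a]; infer_instance
  have h1 : ∀ (mm : Fin d → ℝ), Measure.pi (fun j => gaussianReal (mm j) vv)
      = (Measure.pi fun _ : Fin d => (volume : Measure ℝ)).withDensity
          (fun y => ∏ j, gaussianPDF (mm j) vv (y j)) := by
    intro mm
    haveI := fun j : Fin d => hsf (mm j)
    simp only [hrw]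
    exact my_pi_withDensity _ _ (fun j => measurable_gaussianPDF _ _)
  have hsf1 : ∀ (mm : Fin d → ℝ),
      SigmaFinite ((Measure.pi fun _ : Fin d => (volume : Measure ℝ)).withDensity
        (fun y => ∏ j, gaussianPDF (mm j) vv (y j))) := fun mm => by
    rw [← h1 mm]; infer_instance
  have hm1 : ∀ (mm : Fin d → ℝ), Measurable (fun y : Fin d → ℝ => ∏ j, gaussianPDF (mm j) vv (y j)) :=
    fun mm => Finset.measurable_prod _ fun j _ =>
      (measurable_gaussianPDF _ _).comp (measurable_pi_apply j)
  have h2 : ∀ (mm : Fin N → Fin d → ℝ),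
      Measure.pi (fun i => Measure.pi fun j => gaussianReal (mm i j) vv)
        = (Measure.pi fun _ : Fin N => Measure.pi fun _ : Fin d => (volume : Measure ℝ)).withDensity
            (fun y => ∏ i, ∏ j, gaussianPDF (mm i j) vv (y i j)) := by
    intro mm
    haveI := fun i : Fin N => hsf1 (mm i)
    simp only [h1]
    exact my_pi_withDensity _ _ (fun i => hm1 (mm i))
  have hsf2 : ∀ (mm : Fin N → Fin d → ℝ),
      SigmaFinite ((Measure.pi fun _ : Fin N => Measure.pi fun _ : Fin d =>
          (volume : Measure ℝ)).withDensity
        (fun y => ∏ i, ∏ j, gaussianPDF (mm i j) vv (y i j))) := fun mm => by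
    rw [← h2 mm]; infer_instance
  have hm2 : ∀ (mm : Fin N → Fin d → ℝ),
      Measurable (fun y : Fin N → Fin d → ℝ => ∏ i, ∏ j, gaussianPDF (mm i j) vv (y i j)) :=
    fun mm => Finset.measurable_prod _ fun i _ => Finset.measurable_prod _ fun j _ =>
      (measurable_gaussianPDF _ _).comp ((measurable_pi_apply j).comp (measurable_pi_apply i))
  haveI := fun k : Fin K => hsf2 (m k)
  simp only [h2]
  exact my_pi_withDensity _ _ (fun k => hm2 (m k))

theorem my_gauss_int (vv : ℝ≥0) (hvv : vv ≠ 0) (α m m' : ℝ) :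
    ∫ x : ℝ, (gaussianPDFReal m vv x) ^ α * (gaussianPDFReal m' vv x) ^ (1 - α)
      = Real.exp (α * (α - 1) * (m - m') ^ 2 / (2 * vv)) := by
  have hV : (0 : ℝ) < vv := by
    have := hvv
    positivity
  have hc : (0 : ℝ) < (Real.sqrt (2 * π * vv))⁻¹ := by
    have : (0:ℝ) < 2 * π * vv := by positivity
    positivity
  set c : ℝ := (Real.sqrt (2 * π * vv))⁻¹ with hc_def
  have key : ∀ x : ℝ, (gaussianPDFReal m vv x) ^ α * (gaussianPDFReal m' vv x) ^ (1 - α)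
      = Real.exp (α * (α - 1) * (m - m') ^ 2 / (2 * vv))
        * gaussianPDFReal (α * m + (1 - α) * m') vv x := by
    intro x
    unfold gaussianPDFReal
    rw [Real.mul_rpow hc.le (Real.exp_nonneg _), Real.mul_rpow hc.le (Real.exp_nonneg _),
      ← Real.exp_mul, ← Real.exp_mul]
    have hcc : c ^ α * c ^ (1 - α) = c := by
      rw [← Real.rpow_add hc, add_sub_cancel, Real.rpow_one]
    have hexp : Real.exp (- (x - m) ^ 2 / (2 * vv) * α)
        * Real.exp (- (x - m') ^ 2 / (2 * vv) * (1 - α))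
        = Real.exp (α * (α - 1) * (m - m') ^ 2 / (2 * vv))
          * Real.exp (- (x - (α * m + (1 - α) * m')) ^ 2 / (2 * vv)) := by
      rw [← Real.exp_add, ← Real.exp_add]
      congr 1
      field_simp
      ring
    calc c ^ α * Real.exp (- (x - m) ^ 2 / (2 * vv) * α)
          * (c ^ (1 - α) * Real.exp (- (x - m') ^ 2 / (2 * vv) * (1 - α)))
        = (c ^ α * c ^ (1 - α)) * (Real.exp (- (x - m) ^ 2 / (2 * vv) * α)
            * Real.exp (- (x - m') ^ 2 / (2 * vv) * (1 - α))) := by ring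
      _ = _ := by rw [hcc, hexp]; ring
  simp_rw [key]
  rw [MeasureTheory.integral_const_mul _ _, integral_gaussianPDFReal_eq_one _ hvv, mul_one]

end PMAAux

/-- The Rényi divergence of order `α` between measures `P` and `Q`:
`D_α(P‖Q) = (1/(α−1)) · log ∫ (dP/dQ)^α dQ`. -/
noncomputable def renyiDiv {Ω : Type*} [MeasurableSpace Ω] (α : ℝ)
    (P Q : Measure Ω) : ℝ :=
  (α - 1)⁻¹ * Real.log (∫ x, (P.rnDeriv Q x).toReal ^ α ∂Q)

set_option maxHeartbeats 1600000 in
/-- **PMA with `K` hops is edge-level `(α, Kα/(2σ²))`-RDP (nonadaptive form).**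
`X 0, …, X (K−1)` are `N × d` row-normalized matrices (rows of Euclidean norm `1`), and
`A, A'` are binary adjacency matrices differing in exactly one entry `(v, u)` where
`A v u = 1` and `A' v u = 0`. `P` is the law of `(Aᵀ·X 0 + Z 0, …, Aᵀ·X (K−1) + Z (K−1))`
and `P'` the corresponding law for `A'`, where the `Z k` are independent `N × d` matrices of
independent `N(0, σ²)` entries and the entry `(i, j)` of `Aᵀ·X k` is `∑ l, A l i * X k l j`.
Then for every `α > 1`, `D_α(P ‖ P') ≤ K·α/(2σ²)`. -/
theorem renyiDiv_private_multihop_aggregation_edge_level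
    (N d K : ℕ) (hN : 0 < N) (hd : 0 < d) (hK : 0 < K) (σ : ℝ) (hσ : 0 < σ)
    (X : Fin K → Fin N → Fin d → ℝ)
    (hX : ∀ k i, Real.sqrt (∑ j, (X k i j) ^ 2) = 1)
    (A A' : Fin N → Fin N → ℝ)
    (hA : ∀ i j, A i j = 0 ∨ A i j = 1)
    (hA' : ∀ i j, A' i j = 0 ∨ A' i j = 1)
    (v u : Fin N)
    (h1 : A v u = 1) (h0 : A' v u = 0)
    (hrest : ∀ i j, (i, j) ≠ (v, u) → A i j = A' i j)
    (α : ℝ) (hα : 1 < α) :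
    renyiDiv α
        (Measure.map
          (fun Z : Fin K → Fin N → Fin d → ℝ =>
            fun k i j => (∑ l, A l i * X k l j) + Z k i j)
          (Measure.pi fun _ : Fin K => Measure.pi fun _ : Fin N =>
            Measure.pi fun _ : Fin d => gaussianReal 0 ((σ ^ 2).toNNReal)))
        (Measure.map
          (fun Z : Fin K → Fin N → Fin d → ℝ =>
            fun k i j => (∑ l, A' l i * X k l j) + Z k i j)
          (Measure.pi fun _ : Fin K => Measure.pi fun _ : Fin N =>
            Measure.pi fun _ : Fin d => gaussianReal 0 ((σ ^ 2).toNNReal))) ≤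
      K * α / (2 * σ ^ 2) := by
  classical
  set vv : ℝ≥0 := (σ ^ 2).toNNReal with hvv_def
  have hVc : (vv : ℝ) = σ ^ 2 := Real.coe_toNNReal _ (sq_nonneg σ)
  have hσ2 : (0:ℝ) < σ ^ 2 := by positivity
  have hvv : vv ≠ 0 := by
    intro h
    rw [hvv_def, Real.toNNReal_eq_zero] at h
    exact absurd h (not_le.mpr hσ2)
  -- the ambient space and Lebesgue measure
  set Λ : Measure (Fin K → Fin N → Fin d → ℝ) :=
    Measure.pi fun _ : Fin K => Measure.pi fun _ : Fin N =>
      Measure.pi fun _ : Fin d => (volume : Measure ℝ) with hΛ_def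
  -- mean matrices
  set m : Fin K → Fin N → Fin d → ℝ := fun k i j => ∑ l, A l i * X k l j with hm_def
  set m' : Fin K → Fin N → Fin d → ℝ := fun k i j => ∑ l, A' l i * X k l j with hm'_def
  -- Step A: the mapped measures are product Gaussians
  have hshift : ∀ (c : ℝ),
      MeasurePreserving (fun z : ℝ => c + z) (gaussianReal 0 vv) (gaussianReal c vv) := by
    intro c
    refine ⟨measurable_const_add c, ?_⟩
    simpa using gaussianReal_map_const_add (μ := 0) (v := vv) c
  have hmapP : Measure.map
        (fun Z : Fin K → Fin N → Fin d → ℝ => fun k i j => (∑ l, A l i * X k l j) + Z k i j)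
        (Measure.pi fun _ : Fin K => Measure.pi fun _ : Fin N =>
          Measure.pi fun _ : Fin d => gaussianReal 0 vv)
      = Measure.pi fun k => Measure.pi fun i => Measure.pi fun j => gaussianReal (m k i j) vv :=
    (measurePreserving_pi _ _
      (f := fun k (b : Fin N → Fin d → ℝ) i j => m k i j + b i j) (fun k => measurePreserving_pi _ _
        (f := fun i (c : Fin d → ℝ) j => m k i j + c j) (fun i => measurePreserving_pi _ _
          (f := fun j (z : ℝ) => m k i j + z) (fun j => hshift (m k i j))))).map_eq
  have hmapP' : Measure.map
        (fun Z : Fin K → Fin N → Fin d → ℝ => fun k i j => (∑ l, A' l i * X k l j) + Z k i j)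
        (Measure.pi fun _ : Fin K => Measure.pi fun _ : Fin N =>
          Measure.pi fun _ : Fin d => gaussianReal 0 vv)
      = Measure.pi fun k => Measure.pi fun i => Measure.pi fun j => gaussianReal (m' k i j) vv :=
    (measurePreserving_pi _ _
      (f := fun k (b : Fin N → Fin d → ℝ) i j => m' k i j + b i j) (fun k => measurePreserving_pi _ _
        (f := fun i (c : Fin d → ℝ) j => m' k i j + c j) (fun i => measurePreserving_pi _ _
          (f := fun j (z : ℝ) => m' k i j + z) (fun j => hshift (m' k i j))))).map_eq
  -- Step B: density form
  set Fr : (Fin K → Fin N → Fin d → ℝ) → ℝ :=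
    fun x => ∏ k, ∏ i, ∏ j, gaussianPDFReal (m k i j) vv (x k i j) with hFr_def
  set Gr : (Fin K → Fin N → Fin d → ℝ) → ℝ :=
    fun x => ∏ k, ∏ i, ∏ j, gaussianPDFReal (m' k i j) vv (x k i j) with hGr_def
  have hprod : ∀ (mm : Fin K → Fin N → Fin d → ℝ) (x : Fin K → Fin N → Fin d → ℝ),
      (∏ k, ∏ i, ∏ j, gaussianPDF (mm k i j) vv (x k i j))
        = ENNReal.ofReal (∏ k, ∏ i, ∏ j, gaussianPDFReal (mm k i j) vv (x k i j)) := by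
    intro mm x
    rw [ENNReal.ofReal_prod_of_nonneg (fun k _ => Finset.prod_nonneg fun i _ =>
      Finset.prod_nonneg fun j _ => gaussianPDFReal_nonneg _ _ _)]
    refine Finset.prod_congr rfl fun k _ => ?_
    rw [ENNReal.ofReal_prod_of_nonneg (fun i _ =>
      Finset.prod_nonneg fun j _ => gaussianPDFReal_nonneg _ _ _)]
    refine Finset.prod_congr rfl fun i _ => ?_
    rw [ENNReal.ofReal_prod_of_nonneg (fun j _ => gaussianPDFReal_nonneg _ _ _)]
    rfl
  have hPd : (Measure.pi fun k => Measure.pi fun i => Measure.pi fun j =>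
        gaussianReal (m k i j) vv)
      = Λ.withDensity (fun x => ENNReal.ofReal (Fr x)) := by
    rw [my_gauss_pi vv hvv m]
    congr 1
    funext x
    exact hprod m x
  have hP'd : (Measure.pi fun k => Measure.pi fun i => Measure.pi fun j =>
        gaussianReal (m' k i j) vv)
      = Λ.withDensity (fun x => ENNReal.ofReal (Gr x)) := by
    rw [my_gauss_pi vv hvv m']
    congr 1
    funext x
    exact hprod m' x
  have hFr_meas : Measurable Fr :=
    Finset.measurable_prod _ fun k _ => Finset.measurable_prod _ fun i _ =>
      Finset.measurable_prod _ fun j _ => (measurable_gaussianPDFReal _ _).comp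
        ((measurable_pi_apply j).comp ((measurable_pi_apply i).comp (measurable_pi_apply k)))
  have hGr_meas : Measurable Gr :=
    Finset.measurable_prod _ fun k _ => Finset.measurable_prod _ fun i _ =>
      Finset.measurable_prod _ fun j _ => (measurable_gaussianPDFReal _ _).comp
        ((measurable_pi_apply j).comp ((measurable_pi_apply i).comp (measurable_pi_apply k)))
  have hFr_pos : ∀ x, 0 < Fr x := fun x =>
    Finset.prod_pos fun k _ => Finset.prod_pos fun i _ => Finset.prod_pos fun j _ =>
      gaussianPDFReal_pos _ _ _ hvv
  have hGr_pos : ∀ x, 0 < Gr x := fun x =>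
    Finset.prod_pos fun k _ => Finset.prod_pos fun i _ => Finset.prod_pos fun j _ =>
      gaussianPDFReal_pos _ _ _ hvv
  haveI hPp : IsProbabilityMeasure (Λ.withDensity (fun x => ENNReal.ofReal (Fr x))) := by
    rw [← hPd]; infer_instance
  haveI hP'p : IsProbabilityMeasure (Λ.withDensity (fun x => ENNReal.ofReal (Gr x))) := by
    rw [← hP'd]; infer_instance
  -- Step C: Radon–Nikodym derivative
  have hrn : (Λ.withDensity (fun x => ENNReal.ofReal (Fr x))).rnDeriv
        (Λ.withDensity (fun x => ENNReal.ofReal (Gr x)))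
      =ᵐ[Λ.withDensity (fun x => ENNReal.ofReal (Gr x))]
        fun x => (ENNReal.ofReal (Gr x))⁻¹ * ENNReal.ofReal (Fr x) := by
    have h1 := Measure.rnDeriv_withDensity_right
      (Λ.withDensity (fun x => ENNReal.ofReal (Fr x))) Λ
      (f := fun x => ENNReal.ofReal (Gr x))
      hGr_meas.ennreal_ofReal.aemeasurable
      (Filter.Eventually.of_forall fun x => by
        simp [ENNReal.ofReal_eq_zero, not_le, hGr_pos x])
      (Filter.Eventually.of_forall fun x => ENNReal.ofReal_ne_top)
    have h2 := Measure.rnDeriv_withDensity Λ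
      (f := fun x => ENNReal.ofReal (Fr x)) hFr_meas.ennreal_ofReal
    refine (withDensity_absolutelyContinuous Λ _).ae_eq ?_
    filter_upwards [h1, h2] with x hx1 hx2
    rw [hx1, hx2]
  -- arithmetic facts
  have hα1 : α - 1 ≠ 0 := sub_ne_zero.mpr (ne_of_gt hα)
  have hX2 : ∀ k, (∑ j, X k v j ^ 2) = 1 := by
    intro k
    have hs : (0:ℝ) ≤ ∑ j, X k v j ^ 2 := Finset.sum_nonneg fun j _ => sq_nonneg _
    calc (∑ j, X k v j ^ 2) = Real.sqrt (∑ j, X k v j ^ 2) ^ 2 := (Real.sq_sqrt hs).symm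
      _ = 1 := by rw [hX k v]; norm_num
  have hΔ : ∀ k i j, m k i j - m' k i j = if i = u then X k v j else 0 := by
    intro k i j
    show (∑ l, A l i * X k l j) - (∑ l, A' l i * X k l j) = _
    rw [← Finset.sum_sub_distrib]
    by_cases hiu : i = u
    · rw [if_pos hiu, Finset.sum_eq_single v]
      · rw [hiu, h1, h0]; ring
      · intro l _ hl
        rw [hrest l i (fun h => hl (congrArg Prod.fst h))]; ring
      · intro h; exact absurd (Finset.mem_univ v) h
    · rw [if_neg hiu]
      refine Finset.sum_eq_zero fun l _ => ?_
      rw [hrest l i (fun h => hiu (congrArg Prod.snd h))]; ring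
  have hinner : ∀ k i, (∑ j, α * (α - 1) * (m k i j - m' k i j) ^ 2 / (2 * (vv:ℝ)))
      = if i = u then α * (α - 1) / (2 * σ ^ 2) else 0 := by
    intro k i
    by_cases hiu : i = u
    · rw [if_pos hiu]
      calc (∑ j, α * (α - 1) * (m k i j - m' k i j) ^ 2 / (2 * (vv:ℝ)))
          = ∑ j, α * (α - 1) / (2 * σ ^ 2) * X k v j ^ 2 :=
            Finset.sum_congr rfl fun j _ => by rw [hΔ k i j, if_pos hiu, hVc]; ring
        _ = α * (α - 1) / (2 * σ ^ 2) * ∑ j, X k v j ^ 2 := by rw [Finset.mul_sum]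
        _ = _ := by rw [hX2 k]; ring
    · rw [if_neg hiu]
      refine Finset.sum_eq_zero fun j _ => ?_
      rw [hΔ k i j, if_neg hiu]; ring
  have hsum : (∑ k, ∑ i, ∑ j, α * (α - 1) * (m k i j - m' k i j) ^ 2 / (2 * (vv:ℝ)))
      = K * (α * (α - 1) / (2 * σ ^ 2)) := by
    have : ∀ k : Fin K, (∑ i, ∑ j, α * (α - 1) * (m k i j - m' k i j) ^ 2 / (2 * (vv:ℝ)))
        = α * (α - 1) / (2 * σ ^ 2) := by
      intro k
      rw [Finset.sum_congr rfl fun i _ => hinner k i, Finset.sum_ite_eq' Finset.univ u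
        (fun _ => α * (α - 1) / (2 * σ ^ 2))]
      simp
    rw [Finset.sum_congr rfl fun k _ => this k, Finset.sum_const, Finset.card_univ,
      Fintype.card_fin, nsmul_eq_mul]
  -- the main integral computation
  have hint : (∫ x, ((Λ.withDensity (fun x => ENNReal.ofReal (Fr x))).rnDeriv
          (Λ.withDensity (fun x => ENNReal.ofReal (Gr x))) x).toReal ^ α
        ∂(Λ.withDensity (fun x => ENNReal.ofReal (Gr x))))
      = Real.exp (K * (α * (α - 1) / (2 * σ ^ 2))) := by
    have e1 : (∫ x, ((Λ.withDensity (fun x => ENNReal.ofReal (Fr x))).rnDeriv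
            (Λ.withDensity (fun x => ENNReal.ofReal (Gr x))) x).toReal ^ α
          ∂(Λ.withDensity (fun x => ENNReal.ofReal (Gr x))))
        = ∫ x, ((Gr x)⁻¹ * Fr x) ^ α ∂(Λ.withDensity (fun x => ENNReal.ofReal (Gr x))) := by
      refine integral_congr_ae (hrn.mono fun x hx => ?_)
      simp only [hx]
      rw [ENNReal.toReal_mul, ENNReal.toReal_inv, ENNReal.toReal_ofReal (hGr_pos x).le,
        ENNReal.toReal_ofReal (hFr_pos x).le]
    have e2 : (∫ x, ((Gr x)⁻¹ * Fr x) ^ α ∂(Λ.withDensity (fun x => ENNReal.ofReal (Gr x))))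
        = ∫ x, Gr x * ((Gr x)⁻¹ * Fr x) ^ α ∂Λ := by
      calc (∫ x, ((Gr x)⁻¹ * Fr x) ^ α ∂(Λ.withDensity (fun x => ENNReal.ofReal (Gr x))))
          = ∫ x, ((Gr x)⁻¹ * Fr x) ^ α
              ∂(Λ.withDensity (fun x => (((Gr x).toNNReal : ℝ≥0) : ℝ≥0∞))) := rfl
        _ = ∫ x, (Gr x).toNNReal • (((Gr x)⁻¹ * Fr x) ^ α) ∂Λ :=
            integral_withDensity_eq_integral_smul hGr_meas.real_toNNReal _
        _ = ∫ x, Gr x * ((Gr x)⁻¹ * Fr x) ^ α ∂Λ := by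
            refine integral_congr_ae (Filter.Eventually.of_forall fun x => ?_)
            simp [NNReal.smul_def, Real.coe_toNNReal _ (hGr_pos x).le]
    have e3 : ∀ x, Gr x * ((Gr x)⁻¹ * Fr x) ^ α
        = ∏ k, ∏ i, ∏ j, (gaussianPDFReal (m k i j) vv (x k i j)) ^ α
            * (gaussianPDFReal (m' k i j) vv (x k i j)) ^ (1 - α) := by
      intro x
      have hG := hGr_pos x
      have hF := hFr_pos x
      have h4 : Gr x * ((Gr x)⁻¹ * Fr x) ^ α = Fr x ^ α * Gr x ^ (1 - α) := by
        rw [Real.mul_rpow (inv_nonneg.mpr hG.le) hF.le, Real.inv_rpow hG.le,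
          Real.rpow_sub hG, Real.rpow_one, div_eq_mul_inv]
        ring
      rw [h4, hFr_def, hGr_def]
      simp only
      rw [← Real.finset_prod_rpow _ _ (fun k _ => Finset.prod_nonneg fun i _ =>
          Finset.prod_nonneg fun j _ => gaussianPDFReal_nonneg _ _ _) α,
        ← Real.finset_prod_rpow _ _ (fun k _ => Finset.prod_nonneg fun i _ =>
          Finset.prod_nonneg fun j _ => gaussianPDFReal_nonneg _ _ _) (1 - α),
        ← Finset.prod_mul_distrib]
      refine Finset.prod_congr rfl fun k _ => ?_
      rw [← Real.finset_prod_rpow _ _ (fun i _ =>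
          Finset.prod_nonneg fun j _ => gaussianPDFReal_nonneg _ _ _) α,
        ← Real.finset_prod_rpow _ _ (fun i _ =>
          Finset.prod_nonneg fun j _ => gaussianPDFReal_nonneg _ _ _) (1 - α),
        ← Finset.prod_mul_distrib]
      refine Finset.prod_congr rfl fun i _ => ?_
      rw [← Real.finset_prod_rpow _ _ (fun j _ => gaussianPDFReal_nonneg _ _ _) α,
        ← Real.finset_prod_rpow _ _ (fun j _ => gaussianPDFReal_nonneg _ _ _) (1 - α),
        ← Finset.prod_mul_distrib]
    have hΛvol : Λ = (volume : Measure (Fin K → Fin N → Fin d → ℝ)) := rfl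
    rw [e1, e2]
    calc (∫ x, Gr x * ((Gr x)⁻¹ * Fr x) ^ α ∂Λ)
        = ∫ x : Fin K → Fin N → Fin d → ℝ,
            ∏ k, ∏ i, ∏ j, (gaussianPDFReal (m k i j) vv (x k i j)) ^ α
              * (gaussianPDFReal (m' k i j) vv (x k i j)) ^ (1 - α) := by
          rw [hΛvol]
          exact integral_congr_ae (Filter.Eventually.of_forall fun x => e3 x)
      _ = ∏ k, ∫ y : Fin N → Fin d → ℝ,
            ∏ i, ∏ j, (gaussianPDFReal (m k i j) vv (y i j)) ^ α
              * (gaussianPDFReal (m' k i j) vv (y i j)) ^ (1 - α) :=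
          by rw [integral_fintype_prod_volume_eq_prod (ι := Fin K) (E := fun _ => Fin N → Fin d → ℝ)
            (fun k y => ∏ i, ∏ j, (gaussianPDFReal (m k i j) vv (y i j)) ^ α
              * (gaussianPDFReal (m' k i j) vv (y i j)) ^ (1 - α))]
      _ = ∏ k, ∏ i, ∫ y : Fin d → ℝ,
            ∏ j, (gaussianPDFReal (m k i j) vv (y j)) ^ α
              * (gaussianPDFReal (m' k i j) vv (y j)) ^ (1 - α) :=
          Finset.prod_congr rfl fun k _ => by
            rw [integral_fintype_prod_volume_eq_prod (ι := Fin N) (E := fun _ => Fin d → ℝ)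
              (fun i y => ∏ j, (gaussianPDFReal (m k i j) vv (y j)) ^ α
                * (gaussianPDFReal (m' k i j) vv (y j)) ^ (1 - α))]
      _ = ∏ k, ∏ i, ∏ j, ∫ t : ℝ,
            (gaussianPDFReal (m k i j) vv t) ^ α
              * (gaussianPDFReal (m' k i j) vv t) ^ (1 - α) :=
          Finset.prod_congr rfl fun k _ => Finset.prod_congr rfl fun i _ => by
            rw [integral_fintype_prod_volume_eq_prod (ι := Fin d) (E := fun _ => ℝ)
              (fun j t => (gaussianPDFReal (m k i j) vv t) ^ α
                * (gaussianPDFReal (m' k i j) vv t) ^ (1 - α))]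
      _ = ∏ k, ∏ i, ∏ j, Real.exp (α * (α - 1) * (m k i j - m' k i j) ^ 2 / (2 * (vv:ℝ))) :=
          Finset.prod_congr rfl fun k _ => Finset.prod_congr rfl fun i _ =>
            Finset.prod_congr rfl fun j _ => my_gauss_int vv hvv α (m k i j) (m' k i j)
      _ = Real.exp (K * (α * (α - 1) / (2 * σ ^ 2))) := by
          simp_rw [← Real.exp_sum]
          rw [hsum]
  -- conclusion
  rw [hmapP, hmapP', hPd, hP'd]
  unfold renyiDiv
  rw [hint, Real.log_exp]
  have : (α - 1)⁻¹ * (K * (α * (α - 1) / (2 * σ ^ 2))) = K * α / (2 * σ ^ 2) := by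
    field_simp
  rw [this]
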